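/- arXiv:1802.07636 — 6 statements merged into one kernel-verified Lean document; each statement's English description precedes it below -/
import Mathlib

section
/- For any group G, elements x, y ∈ G, and n ≥ 1, the commutator [x^(2^n), y] equals [x, x, x², x⁴, …, x^(2^(n-1)), y] · [x, x², …, x^(2^(n-1)), y]² · [x², …, x^(2^(n-1)), y]² ⋯ [x^(2^(n-1)), y]², where the iterated commutator [x₁, x₂, …, x_k] denotes [x₁, [x₂, [..., x_k]]]. -/
open scoped commutatorElement

lemma commutator_sq_aux {G : Type*} [Group G] (a b : G) :
    ⁅a ^ 2, b⁆ = ⁅a, ⁅a, b⁆⁆ * ⁅a, b⁆ ^ 2 := by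
  simp only [commutatorElement_def, pow_two]
  group

/-- Lemma 3.1 of the paper: for `n ≥ 1`,
`[x^{2^n}, y] = [x, x, x², …, x^{2^{n-1}}, y] · [x, x², …, x^{2^{n-1}}, y]² ⋯ [x^{2^{n-1}}, y]²`,
where `g k` denotes the right-nested iterated commutator of the last `k` entries,
i.e. `g 0 = y` and `g (k+1) = ⁅x^{2^{n-k-1}}, g k⁆`, so that
`g (n - j) = [x^{2^j}, …, x^{2^{n-1}}, y]`. -/
theorem commutator_two_pow (G : Type*) [Group G] (x y : G) (n : ℕ) (hn : 1 ≤ n)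
    (g : ℕ → G) (hg0 : g 0 = y)
    (hg : ∀ k, k < n → g (k + 1) = ⁅x ^ 2 ^ (n - k - 1), g k⁆) :
    ⁅x ^ 2 ^ n, y⁆ =
      ⁅x, g n⁆ * ((List.range n).map fun j => (g (n - j)) ^ 2).prod := by
  have key : ∀ m, m ≤ n → ⁅x ^ 2 ^ m, g (n - m)⁆ =
      ⁅x, g n⁆ * ((List.range m).map fun j => (g (n - j)) ^ 2).prod := by
    intro m
    induction m with
    | zero => intro _; simp
    | succ m ih =>
      intro h
      have hm : m ≤ n := Nat.le_of_succ_le h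
      have hk := hg (n - (m + 1)) (by omega)
      have e1 : n - (m + 1) + 1 = n - m := by omega
      have e2 : n - (n - (m + 1)) - 1 = m := by omega
      rw [e1, e2] at hk
      have h2 : (2 : ℕ) ^ (m + 1) = 2 ^ m * 2 := by ring
      rw [h2, pow_mul, commutator_sq_aux, ← hk, ih hm,
        List.range_succ, List.map_append, List.prod_append]
      simp [mul_assoc]
  have hkey := key n le_rfl
  rw [Nat.sub_self, hg0] at hkey
  exact hkey
end

section
/- Let H and G be groups, let φ: G → Aut(H) be an action, and define K₂ = ⟨φ(g)(h)·h⁻¹ : g ∈ G, h ∈ H⟩. Then the commutator subgroup of the semidirect product H ⋊_φ G satisfies Γ₂(H ⋊_φ G) = L₂ ⋊_φ Γ₂(G), where L₂ = ⟨K₂, [H, H]⟩ (a subgroup of H), provided φ restricts to an action of Γ₂(G) on L₂. -/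
open scoped commutatorElement

/-- The commutator subgroup of a semidirect product:
`Γ₂(H ⋊_φ G) = L₂ ⋊_φ Γ₂(G)` where `L₂ = ⟨K₂, [H, H]⟩` and
`K₂ = ⟨φ(g)(h)·h⁻¹ : g ∈ G, h ∈ H⟩`, provided `φ` restricts to an action of
`Γ₂(G)` on `L₂`. -/
theorem commutator_semidirectProduct {H G : Type*} [Group H] [Group G]
    (φ : G →* MulAut H)
    (K₂ : Subgroup H)
    (hK₂ : K₂ = Subgroup.closure {x : H | ∃ (g : G) (h : H), x = φ g h * h⁻¹})
    (L₂ : Subgroup H)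
    (hL₂ : L₂ = K₂ ⊔ ⁅(⊤ : Subgroup H), (⊤ : Subgroup H)⁆)
    (hact : ∀ g ∈ commutator G, ∀ h ∈ L₂, φ g h ∈ L₂) :
    commutator (H ⋊[φ] G) =
      L₂.map SemidirectProduct.inl ⊔ (commutator G).map SemidirectProduct.inr := by
  have hcomm : ⁅(⊤ : Subgroup H), (⊤ : Subgroup H)⁆ ≤ L₂ := hL₂ ▸ le_sup_right
  have hK₂le : K₂ ≤ L₂ := hL₂ ▸ le_sup_left
  have hKmem : ∀ (g : G) (h : H), φ g h * h⁻¹ ∈ L₂ := by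
    intro g h
    exact hK₂le (hK₂ ▸ Subgroup.subset_closure ⟨g, h, rfl⟩)
  haveI hnorm : L₂.Normal := by
    constructor
    intro n hn g
    have : g * n * g⁻¹ * n⁻¹ ∈ L₂ :=
      hcomm (Subgroup.commutator_mem_commutator (Subgroup.mem_top g) (Subgroup.mem_top n))
    have := mul_mem this hn
    simpa using this
  -- the homomorphism P → H ⧸ L₂, (h, g) ↦ ⟦h⟧
  let f : H ⋊[φ] G →* H ⧸ L₂ :=
    { toFun := fun p => QuotientGroup.mk p.left
      map_one' := by simp
      map_mul' := by
        intro a b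
        show (QuotientGroup.mk (a.left * φ a.right b.left) : H ⧸ L₂)
          = QuotientGroup.mk a.left * QuotientGroup.mk b.left
        have h1 : (QuotientGroup.mk (φ a.right b.left) : H ⧸ L₂)
            = QuotientGroup.mk b.left := by
          rw [QuotientGroup.eq_iff_div_mem]
          have := hKmem a.right b.left
          simpa [div_eq_mul_inv] using this
        rw [← h1]
        rfl }
  apply le_antisymm
  · rw [commutator, Subgroup.commutator_le]
    intro p _ q _
    -- the H-component of a commutator lies in L₂
    have hleft : (⁅p, q⁆ : H ⋊[φ] G).left ∈ L₂ := by
      have h1 : f ⁅p, q⁆ = ⁅f p, f q⁆ := map_commutatorElement f p q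
      have h2 : ⁅f p, f q⁆ = 1 := by
        rw [commutatorElement_eq_one_iff_mul_comm]
        induction' hp : f p using QuotientGroup.induction_on with a
        induction' hq : f q using QuotientGroup.induction_on with b
        rw [← QuotientGroup.mk_mul, ← QuotientGroup.mk_mul, QuotientGroup.eq_iff_div_mem]
        have : ⁅a, b⁆ ∈ L₂ :=
          hcomm (Subgroup.commutator_mem_commutator (Subgroup.mem_top _) (Subgroup.mem_top _))
        simpa [commutatorElement_def, div_eq_mul_inv, mul_assoc] using this
      have : (QuotientGroup.mk (⁅p, q⁆ : H ⋊[φ] G).left : H ⧸ L₂) = 1 := by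
        rw [show (QuotientGroup.mk (⁅p, q⁆ : H ⋊[φ] G).left : H ⧸ L₂) = f ⁅p, q⁆ from rfl,
          h1, h2]
      exact (QuotientGroup.eq_one_iff _).mp this
    have hright : (⁅p, q⁆ : H ⋊[φ] G).right ∈ commutator G := by
      have : (⁅p, q⁆ : H ⋊[φ] G).right = ⁅p.right, q.right⁆ := by
        simp [commutatorElement_def]
      rw [this]
      exact Subgroup.commutator_mem_commutator (Subgroup.mem_top _) (Subgroup.mem_top _)
    have : (⁅p, q⁆ : H ⋊[φ] G)
        = SemidirectProduct.inl (⁅p, q⁆ : H ⋊[φ] G).left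
          * SemidirectProduct.inr (⁅p, q⁆ : H ⋊[φ] G).right :=
      (SemidirectProduct.inl_left_mul_inr_right _).symm
    rw [this]
    exact mul_mem (Subgroup.mem_sup_left ⟨_, hleft, rfl⟩)
      (Subgroup.mem_sup_right ⟨_, hright, rfl⟩)
  · apply sup_le
    · rw [Subgroup.map_le_iff_le_comap, hL₂]
      apply sup_le
      · rw [hK₂, Subgroup.closure_le]
        rintro x ⟨g, h, rfl⟩
        show SemidirectProduct.inl (φ g h * h⁻¹) ∈ commutator (H ⋊[φ] G)
        have : (SemidirectProduct.inl (φ g h * h⁻¹) : H ⋊[φ] G)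
            = ⁅(SemidirectProduct.inr g : H ⋊[φ] G), SemidirectProduct.inl h⁆ := by
          rw [map_mul, SemidirectProduct.inl_aut, commutatorElement_def]; simp
        rw [this]
        exact Subgroup.commutator_mem_commutator (Subgroup.mem_top _) (Subgroup.mem_top _)
      · rw [Subgroup.commutator_le]
        intro a _ b _
        show SemidirectProduct.inl ⁅a, b⁆ ∈ commutator (H ⋊[φ] G)
        rw [map_commutatorElement]
        exact Subgroup.commutator_mem_commutator (Subgroup.mem_top _) (Subgroup.mem_top _)
    · rw [commutator, Subgroup.map_commutator]
      exact Subgroup.commutator_mono le_top le_top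
end

section
/- Let H, G be groups with action φ: G → Aut(H), and define L₁ = H and, for n ≥ 2, K_n = ⟨φ(g)(h)h⁻¹ : g ∈ Γ_{n−1}(G), h ∈ H⟩, H_n = ⟨φ(g)(h)h⁻¹ : g ∈ G, h ∈ L_{n−1}⟩, L_n = ⟨K_n, H_n, [H, L_{n−1}]⟩. Then each L_n is a normal subgroup of H, and L_{n+1} ⊆ L_n for all n. -/
/-- The subgroups `L_n` of `H` from Theorem 1.2 of the paper (zero-based indexing, so
`Lseries φ (n-1)` is the paper's `L_n`): `L₁ = H` and
`L_{n+1} = ⟨K_{n+1}, H_{n+1}, [H, L_n]⟩` where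
`K_{n+1} = ⟨φ(g)(h)h⁻¹ : g ∈ Γ_n(G), h ∈ H⟩` and
`H_{n+1} = ⟨φ(g)(h)h⁻¹ : g ∈ G, h ∈ L_n⟩`. -/
def Lseries {G H : Type*} [Group G] [Group H] (φ : G →* MulAut H) : ℕ → Subgroup H
  | 0 => ⊤
  | n + 1 =>
      Subgroup.closure {x : H | ∃ g ∈ Subgroup.lowerCentralSeries (⊤ : Subgroup G) n, ∃ h : H, x = φ g h * h⁻¹} ⊔
      Subgroup.closure {x : H | ∃ g : G, ∃ h ∈ Lseries φ n, x = φ g h * h⁻¹} ⊔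
      ⁅(⊤ : Subgroup H), Lseries φ n⁆

lemma Lseries_succ {G H : Type*} [Group G] [Group H] (φ : G →* MulAut H) (n : ℕ) :
    Lseries φ (n + 1) =
      Subgroup.closure {x : H | ∃ g ∈ Subgroup.lowerCentralSeries (⊤ : Subgroup G) n, ∃ h : H, x = φ g h * h⁻¹} ⊔
      Subgroup.closure {x : H | ∃ g : G, ∃ h ∈ Lseries φ n, x = φ g h * h⁻¹} ⊔
      ⁅(⊤ : Subgroup H), Lseries φ n⁆ := rfl

lemma Lseries_succ_le {G H : Type*} [Group G] [Group H] (φ : G →* MulAut H) :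
    ∀ n, Lseries φ (n + 1) ≤ Lseries φ n := by
  intro n
  induction n with
  | zero => exact le_top
  | succ n ih =>
    rw [Lseries_succ φ (n + 1), Lseries_succ φ n]
    refine sup_le (sup_le ?_ ?_) ?_
    · refine (Subgroup.closure_le _).2 ?_
      rintro x ⟨g, hg, h, rfl⟩
      exact Subgroup.mem_sup_left <| Subgroup.mem_sup_left <| Subgroup.subset_closure
        ⟨g, Subgroup.lowerCentralSeries_antitone _ (Nat.le_succ n) hg, h, rfl⟩
    · refine (Subgroup.closure_le _).2 ?_
      rintro x ⟨g, h, hh, rfl⟩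
      exact Subgroup.mem_sup_left <| Subgroup.mem_sup_right <| Subgroup.subset_closure ⟨g, h, ih hh, rfl⟩
    · exact (Subgroup.commutator_mono le_rfl ih).trans le_sup_right

/-- Each `L_n` is a normal subgroup of `H`, and the `L_n` are decreasing. -/
theorem Lseries_normal_and_antitone {G H : Type*} [Group G] [Group H]
    (φ : G →* MulAut H) :
    ∀ n : ℕ, (Lseries φ n).Normal ∧ Lseries φ (n + 1) ≤ Lseries φ n := by
  intro n
  refine ⟨?_, Lseries_succ_le φ n⟩
  cases n with
  | zero => rw [show Lseries φ 0 = ⊤ from rfl]; exact inferInstance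
  | succ n =>
    constructor
    intro x hx h
    open scoped commutatorElement in
    have h1 : ⁅h, x⁆ ∈ Lseries φ (n + 1) := by
      refine Subgroup.mem_sup_right (Subgroup.commutator_mem_commutator (Subgroup.mem_top h)
        (Lseries_succ_le φ n hx))
    open scoped commutatorElement in
    have h2 : h * x * h⁻¹ = ⁅h, x⁆ * x := by group
    rw [h2]
    exact mul_mem h1 hx
end

section
/- Let π₁(K) = ⟨a, b : a·b = b·a⁻¹⟩ be the Klein bottle group. Then for all n ≥ 2, the lower central series satisfies Γ_n(π₁(K)) = ⟨a^(2^(n−1))⟩. -/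
/-- The single relation `b·a·b⁻¹·a = 1`, i.e. `b·a·b⁻¹ = a⁻¹`, of the Klein bottle group,
where `a = FreeGroup.of 0` and `b = FreeGroup.of 1`. -/
def kleinRels : Set (FreeGroup (Fin 2)) :=
  {FreeGroup.of 1 * FreeGroup.of 0 * (FreeGroup.of 1)⁻¹ * FreeGroup.of 0}

/-- The Klein bottle group `π₁(𝕂) = ⟨a, b : b·a·b⁻¹ = a⁻¹⟩`. -/
abbrev KleinBottleGroup := PresentedGroup kleinRels

namespace KleinAux

open scoped commutatorElement

def a : KleinBottleGroup := PresentedGroup.of 0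
def b : KleinBottleGroup := PresentedGroup.of 1

lemma rel : b * a * b⁻¹ * a = 1 := by
  have h : (FreeGroup.of 1 * FreeGroup.of 0 * (FreeGroup.of 1)⁻¹ * FreeGroup.of 0 :
      FreeGroup (Fin 2)) ∈ kleinRels := rfl
  have := (QuotientGroup.eq_one_iff
      (FreeGroup.of 1 * FreeGroup.of 0 * (FreeGroup.of 1)⁻¹ * FreeGroup.of 0 :
        FreeGroup (Fin 2))).mpr (Subgroup.subset_normalClosure h)
  exact this

lemma conj_b : b * a * b⁻¹ = a⁻¹ := eq_inv_of_mul_eq_one_left rel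

lemma conj_inv {x c d : KleinBottleGroup} (h : x * c * x⁻¹ = d) : x⁻¹ * d * x⁻¹⁻¹ = c := by
  subst h; group

lemma conj_of_inv {x c : KleinBottleGroup} : x * c⁻¹ * x⁻¹ = (x * c * x⁻¹)⁻¹ := by group

/-- Set of elements conjugating `a` to `a` or `a⁻¹` is a subgroup. -/
def N : Subgroup KleinBottleGroup where
  carrier := {g | g * a * g⁻¹ = a ∨ g * a * g⁻¹ = a⁻¹}
  one_mem' := by left; group
  mul_mem' := by
    rintro x y (hx | hx) (hy | hy) <;> [left; right; right; left] <;>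
      · show x * y * a * (x * y)⁻¹ = _
        rw [mul_inv_rev, show x * y * a * (y⁻¹ * x⁻¹) = x * (y * a * y⁻¹) * x⁻¹ by group, hy]
        first
        | exact hx
        | (rw [conj_of_inv, hx] <;> group)
  inv_mem' := by
    rintro x (hx | hx)
    · left; exact conj_inv hx
    · right
      have h2 : x * a⁻¹ * x⁻¹ = a := by rw [conj_of_inv, hx, inv_inv]
      have := conj_inv h2
      rw [← this]

lemma conj_a (g : KleinBottleGroup) : g * a * g⁻¹ = a ∨ g * a * g⁻¹ = a⁻¹ := by
  have : g ∈ N := by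
    refine PresentedGroup.generated_by kleinRels N (fun j => ?_) g
    fin_cases j
    · left; show a * a * a⁻¹ = a; group
    · right; exact conj_b
  exact this

lemma conj_zpow' (g : KleinBottleGroup) (j : ℤ) :
    g * a ^ j * g⁻¹ = a ^ j ∨ g * a ^ j * g⁻¹ = a ^ (-j) := by
  rcases conj_a g with h | h
  · left; rw [← conj_zpow, h]
  · right; rw [← conj_zpow, h, inv_zpow, zpow_neg]

lemma conj_b_zpow (j : ℤ) : b * a ^ j * b⁻¹ = a ^ (-j) := by
  rw [← conj_zpow, conj_b, inv_zpow, zpow_neg]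

lemma normal_zpowers (k : ℤ) : (Subgroup.zpowers (a ^ k)).Normal := by
  constructor
  rintro x ⟨i, rfl⟩ g
  show g * (a ^ k) ^ i * g⁻¹ ∈ _
  rw [← zpow_mul]
  rcases conj_zpow' g (k * i) with h | h <;> rw [h]
  · exact ⟨i, by show (a ^ k) ^ i = _; rw [← zpow_mul]⟩
  · exact ⟨-i, by show (a ^ k) ^ (-i) = _; rw [← zpow_mul, mul_neg]⟩

lemma comm_zpow_b (j : ℤ) : ⁅a ^ j, b⁆ = a ^ (2 * j) := by
  rw [commutatorElement_def,
    show a ^ j * b * (a ^ j)⁻¹ * b⁻¹ = a ^ j * (b * (a ^ j)⁻¹ * b⁻¹) by group,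
    show (a ^ j)⁻¹ = a ^ (-j) by group, conj_b_zpow, neg_neg, ← zpow_add, two_mul]

lemma comm_zpow (j : ℤ) (g : KleinBottleGroup) :
    ⁅a ^ j, g⁆ = 1 ∨ ⁅a ^ j, g⁆ = a ^ (2 * j) := by
  rw [commutatorElement_def,
    show a ^ j * g * (a ^ j)⁻¹ * g⁻¹ = a ^ j * (g * (a ^ j)⁻¹ * g⁻¹) by group,
    show (a ^ j)⁻¹ = a ^ (-j) by group]
  rcases conj_zpow' g (-j) with h | h <;> rw [h]
  · left; group
  · right; rw [neg_neg, ← zpow_add, two_mul]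

lemma step (k : ℤ) : ⁅Subgroup.zpowers (a ^ k), (⊤ : Subgroup KleinBottleGroup)⁆ =
    Subgroup.zpowers (a ^ (2 * k)) := by
  apply le_antisymm
  · rw [Subgroup.commutator_le]
    rintro x ⟨i, rfl⟩ g -
    show ⁅(a ^ k) ^ i, g⁆ ∈ _
    rw [← zpow_mul]
    rcases comm_zpow (k * i) g with h | h <;> rw [h]
    · exact one_mem _
    · exact ⟨i, by show (a ^ (2 * k)) ^ i = _; rw [← zpow_mul]; ring_nf⟩
  · rw [Subgroup.zpowers_le, ← comm_zpow_b k]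
    exact Subgroup.commutator_mem_commutator (Subgroup.mem_zpowers _) (Subgroup.mem_top _)

section Base

abbrev H : Subgroup KleinBottleGroup := Subgroup.zpowers (a ^ (2 : ℤ))

instance : H.Normal := normal_zpowers 2

abbrev π : KleinBottleGroup →* KleinBottleGroup ⧸ H := QuotientGroup.mk' H

lemma comm_mem {z w : KleinBottleGroup} (h : ⁅z, w⁆ ∈ H) : Commute (π z) (π w) := by
  have h1 : π ⁅z, w⁆ = 1 := (QuotientGroup.eq_one_iff _).mpr h
  rw [map_commutatorElement] at h1
  exact commutatorElement_eq_one_iff_commute.mp h1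

lemma comm_a_mem (z : KleinBottleGroup) : ⁅a, z⁆ ∈ H := by
  have := comm_zpow 1 z
  rw [zpow_one, mul_one] at this
  rcases this with h | h <;> rw [h]
  · exact one_mem _
  · exact Subgroup.mem_zpowers _

lemma a_central : π a ∈ Subgroup.center (KleinBottleGroup ⧸ H) := by
  rw [Subgroup.mem_center_iff]
  intro y
  induction y using QuotientGroup.induction_on with
  | H z => exact (comm_mem (comm_a_mem z)).symm.eq

lemma b_central : π b ∈ Subgroup.center (KleinBottleGroup ⧸ H) := by
  rw [Subgroup.mem_center_iff]
  intro y
  induction y using QuotientGroup.induction_on with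
  | H z =>
    have hz : z ∈ (Subgroup.centralizer {π b}).comap π := by
      refine PresentedGroup.generated_by kleinRels _ (fun j => ?_) z
      fin_cases j
      · show π a ∈ Subgroup.centralizer {π b}
        rw [Subgroup.mem_centralizer_iff]
        rintro s rfl
        exact (comm_mem (comm_a_mem b)).symm.eq
      · show π b ∈ Subgroup.centralizer {π b}
        rw [Subgroup.mem_centralizer_iff]
        rintro s rfl
        rfl
    exact (Subgroup.mem_centralizer_iff.mp hz _ rfl).symm

lemma base : commutator KleinBottleGroup = H := by
  apply le_antisymm
  · letI : CommGroup (KleinBottleGroup ⧸ H) :=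
      { (inferInstance : Group (KleinBottleGroup ⧸ H)) with
        mul_comm := by
          intro x y
          induction x using QuotientGroup.induction_on with
          | H g =>
          have : g ∈ (Subgroup.center (KleinBottleGroup ⧸ H)).comap π := by
            refine PresentedGroup.generated_by kleinRels _ (fun j => ?_) g
            fin_cases j
            · exact a_central
            · exact b_central
          exact (Subgroup.mem_center_iff.mp this y).symm }
    have := Abelianization.commutator_subset_ker π
    rwa [QuotientGroup.ker_mk'] at this
  · rw [Subgroup.zpowers_le, show (2:ℤ) = 2 * 1 by ring, ← comm_zpow_b 1, commutator_def]
    exact Subgroup.commutator_mem_commutator (Subgroup.mem_top _) (Subgroup.mem_top _)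

end Base

lemma lcs (m : ℕ) :
    (⊤ : Subgroup KleinBottleGroup).lowerCentralSeries (m + 1) = Subgroup.zpowers (a ^ ((2 : ℤ) ^ (m + 1))) := by
  induction m with
  | zero =>
    rw [lowerCentralSeries_one, base]
    norm_num
    rfl
  | succ m ih =>
    rw [lowerCentralSeries_succ, ih]
    show ⁅Subgroup.zpowers (a ^ ((2:ℤ) ^ (m + 1))), (⊤ : Subgroup KleinBottleGroup)⁆ = _
    rw [step, show (2 * (2:ℤ) ^ (m + 1)) = (2:ℤ) ^ (m + 1 + 1) by ring]

end KleinAux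

/-- For all `n ≥ 2`, `Γ_n(π₁(𝕂)) = ⟨a^{2^{n-1}}⟩` (here `lowerCentralSeries _ (n-1)` is
the paper's `Γ_n`). -/
theorem lowerCentralSeries_kleinBottleGroup (n : ℕ) (hn : 2 ≤ n) :
    (⊤ : Subgroup KleinBottleGroup).lowerCentralSeries (n - 1) =
      Subgroup.zpowers ((PresentedGroup.of 0 : KleinBottleGroup) ^ 2 ^ (n - 1)) := by
  obtain ⟨m, hm⟩ : ∃ m, n - 1 = m + 1 := ⟨n - 2, by omega⟩
  rw [hm, KleinAux.lcs m]
  congr 1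
end

section
/- Let G be a group, let A be a normal subgroup of H = G (or A = ∅), and for 1 ≤ l ≤ m define E_{l,m} to be the subgroup of H generated by all elements [x₁,…,x_i]^(2^(m−i−k)) with l ≤ i ≤ m, 0 ≤ k ≤ m−i, where x₁,…,x_i ∈ H and at least k of them lie in A (iterated right-nested commutators). Then [E_{l,m}, H] ⊆ E_{l+1,m+1}. -/
open scoped commutatorElement

/-- Right-nested iterated commutator: `nestedComm [x₁, …, x_i] = [x₁, [x₂, …, x_i]]`. -/
def nestedComm {H : Type*} [Group H] : List H → H
  | [] => 1
  | [x] => x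
  | x :: xs => ⁅x, nestedComm xs⁆

/-- The subgroup `E_{l,m}` of `H`, generated by all `[x₁, …, x_i]^{2^{m-i-k}}` with
`l ≤ i ≤ m`, `0 ≤ k ≤ m - i`, where at least `k` of the entries `x₁, …, x_i` lie in `A`. -/
def Esub {H : Type*} [Group H] (A : Set H) (l m : ℕ) : Subgroup H :=
  Subgroup.closure
    {z : H | ∃ (xs : List H) (k : ℕ) (S : Finset (Fin xs.length)),
      l ≤ xs.length ∧ xs.length ≤ m ∧ k ≤ m - xs.length ∧ k ≤ S.card ∧
      (∀ j ∈ S, xs.get j ∈ A) ∧ z = nestedComm xs ^ 2 ^ (m - xs.length - k)}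

section Lemmas

variable {G G' : Type*} [Group G] [Group G']

lemma nestedComm_cons (a : G) (l : List G) (h : l ≠ []) :
    nestedComm (a :: l) = ⁅a, nestedComm l⁆ := by
  cases l with
  | nil => exact absurd rfl h
  | cons b t => rfl

lemma nestedComm_singleton (a : G) : nestedComm [a] = a := rfl

lemma map_nestedComm (f : G →* G') : ∀ l : List G, nestedComm (l.map f) = f (nestedComm l)
  | [] => by simp [nestedComm]
  | [x] => by simp [nestedComm]
  | x :: y :: t => by
    have ih := map_nestedComm f (y :: t)
    simp only [List.map_cons] at ih ⊢
    rw [nestedComm_cons (f x) (f y :: t.map f) (by simp),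
      nestedComm_cons x (y :: t) (by simp), map_commutatorElement, ih]

lemma nestedComm_append (zs : List G) (hzs : zs ≠ []) :
    ∀ ys : List G, nestedComm (ys ++ [nestedComm zs]) = nestedComm (ys ++ zs)
  | [] => by simp [nestedComm_singleton]
  | a :: ys => by
    rw [List.cons_append, List.cons_append,
      nestedComm_cons _ _ (by simp), nestedComm_cons _ _ (by simp [hzs]),
      nestedComm_append zs hzs ys]

/-- The recursive hypothesis: `Hc q c` says that all right-nested commutators ending in `c`
with `j ≥ 1` extra entries satisfy `[y₁,…,y_j,c]^(2^(q+1-j)) = 1`. -/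
def Hc {Q : Type*} [Group Q] : ℕ → Q → Prop
  | 0, c => ∀ y : Q, ⁅y, c⁆ = 1
  | q + 1, c => ∀ y : Q, ⁅y, c⁆ ^ 2 ^ (q + 1) = 1 ∧ Hc q ⁅y, c⁆

/-- Central elements of order dividing 2. -/
def Omega (Q : Type*) [Group Q] : Subgroup Q where
  carrier := {x | x ∈ Subgroup.center Q ∧ x ^ 2 = 1}
  one_mem' := ⟨Subgroup.one_mem _, one_pow 2⟩
  mul_mem' := by
    rintro a b ⟨ha, ha2⟩ ⟨hb, hb2⟩
    refine ⟨mul_mem ha hb, ?_⟩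
    have hcomm : Commute a b := ((Subgroup.mem_center_iff.mp ha) b).symm
    rw [hcomm.mul_pow, ha2, hb2, one_mul]
  inv_mem' := by
    rintro a ⟨ha, ha2⟩
    exact ⟨inv_mem ha, by rw [inv_pow, ha2, inv_one]⟩

lemma mem_Omega {Q : Type*} [Group Q] {x : Q} :
    x ∈ Omega Q ↔ x ∈ Subgroup.center Q ∧ x ^ 2 = 1 := Iff.rfl

instance Omega_normal (Q : Type*) [Group Q] : (Omega Q).Normal := by
  constructor
  intro n hn g
  have : g * n * g⁻¹ = n := by
    rw [Subgroup.mem_center_iff.mp hn.1 g]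
    group
  rwa [this]

lemma comm_sq_eq_one {Q : Type*} [Group Q] (y b : Q)
    (h1 : ⁅y, b⁆ ∈ Subgroup.center Q) (h2 : ⁅y, b⁆ ^ 2 = 1) : ⁅y, b ^ 2⁆ = 1 := by
  set v := ⁅y, b⁆ with hv
  have hyb : y * b * y⁻¹ = v * b := by rw [hv, commutatorElement_def]; group
  have hbv : b * v = v * b := Subgroup.mem_center_iff.mp h1 b
  have hexp : ⁅y, b ^ 2⁆ = (y * b * y⁻¹) * (y * b * y⁻¹) * b⁻¹ * b⁻¹ := by
    rw [commutatorElement_def, pow_two]; group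
  rw [hexp, hyb]
  calc v * b * (v * b) * b⁻¹ * b⁻¹ = v * (b * v) * b * b⁻¹ * b⁻¹ := by group
    _ = v * (v * b) * b * b⁻¹ * b⁻¹ := by rw [hbv]
    _ = v ^ 2 := by rw [pow_two]; group
    _ = 1 := h2

end Lemmas

universe u

/-- Conclusion of the main lemma. -/
def MainP (q : ℕ) : Prop :=
  ∀ {Q : Type u} [Group Q] (c : Q), Hc q c → ∀ y : Q, ⁅y, c ^ 2 ^ q⁆ = 1

/-- Pushing `Hc` down the quotient by `Omega`. -/
def PushP (q : ℕ) : Prop :=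
  ∀ {Q : Type u} [Group Q] (c : Q), Hc (q + 1) c →
    Hc q ((QuotientGroup.mk' (Omega Q)) c)

lemma mem_Omega_of (Q : Type u) [Group Q] (x : Q) (hc : ∀ z : Q, ⁅z, x⁆ = 1)
    (h2 : x ^ 2 = 1) : x ∈ Omega Q := by
  refine ⟨Subgroup.mem_center_iff.mpr fun g => ?_, h2⟩
  exact commutatorElement_eq_one_iff_mul_comm.mp (hc g)

lemma main_and_push : ∀ q : ℕ, MainP.{u} q ∧ PushP.{u} q := by
  intro q
  induction q with
  | zero =>
    constructor
    · intro Q _ c hc y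
      rw [pow_zero, pow_one]
      exact hc y
    · intro Q _ c hc
      intro ybar
      obtain ⟨y, rfl⟩ := QuotientGroup.mk'_surjective (Omega Q) ybar
      show ⁅(QuotientGroup.mk' (Omega Q)) y, (QuotientGroup.mk' (Omega Q)) c⁆ = 1
      rw [← map_commutatorElement]
      refine (QuotientGroup.eq_one_iff _).mpr ?_
      obtain ⟨h2, h0⟩ := hc y
      exact mem_Omega_of Q _ h0 (by rw [← h2]; norm_num)
  | succ n ih =>
    obtain ⟨ihMain, ihPush⟩ := ih
    have hMain : MainP.{u} (n + 1) := by
      intro Q _ c hc y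
      have h1 : Hc n ((QuotientGroup.mk' (Omega Q)) c) := ihPush c hc
      have h2 := ihMain _ h1 ((QuotientGroup.mk' (Omega Q)) y)
      rw [← map_pow, ← map_commutatorElement] at h2
      have hv : ⁅y, c ^ 2 ^ n⁆ ∈ Omega Q := (QuotientGroup.eq_one_iff _).mp h2
      have hsq : c ^ 2 ^ (n + 1) = (c ^ 2 ^ n) ^ 2 := by
        rw [← pow_mul, pow_succ]
      rw [hsq]
      exact comm_sq_eq_one y _ hv.1 hv.2
    refine ⟨hMain, ?_⟩
    intro Q _ c hc
    intro ybar
    obtain ⟨y, rfl⟩ := QuotientGroup.mk'_surjective (Omega Q) ybar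
    obtain ⟨hd1, hd2⟩ := hc y
    constructor
    · show ⁅(QuotientGroup.mk' (Omega Q)) y, (QuotientGroup.mk' (Omega Q)) c⁆ ^ 2 ^ (n + 1) = 1
      rw [← map_commutatorElement, ← map_pow]
      refine (QuotientGroup.eq_one_iff _).mpr ?_
      refine mem_Omega_of Q _ ?_ ?_
      · exact hMain ⁅y, c⁆ hd2
      · rw [← pow_mul, ← pow_succ]
        exact hd1
    · show Hc n ⁅(QuotientGroup.mk' (Omega Q)) y, (QuotientGroup.mk' (Omega Q)) c⁆
      rw [← map_commutatorElement]
      exact ihPush ⁅y, c⁆ hd2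

lemma hc_of_nested {Q : Type u} [Group Q] :
    ∀ (q : ℕ) (c : Q),
      (∀ ys : List Q, ys ≠ [] → ys.length ≤ q + 1 →
        nestedComm (ys ++ [c]) ^ 2 ^ (q + 1 - ys.length) = 1) → Hc q c := by
  intro q
  induction q with
  | zero =>
    intro c h y
    have := h [y] (by simp) (by simp)
    simpa [nestedComm] using this
  | succ n ih =>
    intro c h y
    constructor
    · have := h [y] (by simp) (by simp)
      simpa [nestedComm] using this
    · refine ih ⁅y, c⁆ ?_
      intro ys hne hlen
      have h2 := h (ys ++ [y]) (by simp) (by simp; omega)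
      have e1 : (ys ++ [y]) ++ [c] = ys ++ [y, c] := by simp
      have e2 : nestedComm (ys ++ [⁅y, c⁆]) = nestedComm (ys ++ [y, c]) := by
        have : (⁅y, c⁆ : Q) = nestedComm [y, c] := by simp [nestedComm]
        rw [this, nestedComm_append [y, c] (by simp) ys]
      rw [e1] at h2
      rw [e2]
      have e3 : n + 1 + 1 - (ys ++ [y]).length = n + 1 - ys.length := by
        simp only [List.length_append, List.length_cons, List.length_nil]
        omega
      rw [e3] at h2
      exact h2

lemma list_lift {α β : Type*} {f : α → β} (hf : Function.Surjective f) :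
    ∀ ys : List β, ∃ ls : List α, ls.map f = ys
  | [] => ⟨[], rfl⟩
  | y :: ys => by
    obtain ⟨ls, hls⟩ := list_lift hf ys
    obtain ⟨a, ha⟩ := hf y
    exact ⟨a :: ls, by simp [hls, ha]⟩

lemma mem_Esub {H : Type*} [Group H] {A : Set H} {l m : ℕ} {z : H}
    (h : ∃ (xs : List H) (k : ℕ) (S : Finset (Fin xs.length)),
      l ≤ xs.length ∧ xs.length ≤ m ∧ k ≤ m - xs.length ∧ k ≤ S.card ∧
      (∀ j ∈ S, xs.get j ∈ A) ∧ z = nestedComm xs ^ 2 ^ (m - xs.length - k)) :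
    z ∈ Esub A l m :=
  Subgroup.subset_closure h

lemma esub_normal {H : Type*} [Group H] (A : Set H)
    (hA : A = ∅ ∨ ∃ N : Subgroup H, N.Normal ∧ A = ↑N) (l m : ℕ) :
    (Esub A l m).Normal := by
  constructor
  intro n hn g
  rw [Esub] at hn
  refine Subgroup.closure_induction
    (p := fun x _ => g * x * g⁻¹ ∈ Esub A l m) ?_ ?_ ?_ ?_ hn
  · rintro x ⟨xs, k, S, h1, h2, h3, h4, h5, rfl⟩
    apply mem_Esub
    have hlen : (xs.map (fun a => g * a * g⁻¹)).length = xs.length := by simp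
    refine ⟨xs.map (fun a => g * a * g⁻¹), k,
      S.map (finCongr hlen.symm).toEmbedding, ?_, ?_, ?_, ?_, ?_, ?_⟩
    · omega
    · omega
    · omega
    · rwa [Finset.card_map]
    · intro j hj
      obtain ⟨j0, hj0, rfl⟩ := Finset.mem_map.mp hj
      rw [List.get_eq_getElem]
      simp only [Equiv.coe_toEmbedding, finCongr_apply, Fin.coe_cast, List.getElem_map]
      have hmem : xs.get j0 ∈ A := h5 j0 hj0
      rw [List.get_eq_getElem] at hmem
      rcases hA with hA | ⟨N, hNnorm, hAN⟩
      · rw [hA] at hmem; exact absurd hmem (Set.notMem_empty _)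
      · rw [hAN] at hmem ⊢
        exact hNnorm.conj_mem _ hmem g
    · have : g * nestedComm xs * g⁻¹ = nestedComm (xs.map (fun a => g * a * g⁻¹)) := by
        have := map_nestedComm (MulAut.conj g).toMonoidHom xs
        simpa [MulAut.conj] using this.symm
      rw [hlen, ← this, conj_pow]
  · simpa using Subgroup.one_mem _
  · intro x y _ _ hx hy
    have : g * (x * y) * g⁻¹ = (g * x * g⁻¹) * (g * y * g⁻¹) := by group
    rw [this]; exact Subgroup.mul_mem _ hx hy
  · intro x _ hx
    have : g * x⁻¹ * g⁻¹ = (g * x * g⁻¹)⁻¹ := by group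
    rw [this]; exact Subgroup.inv_mem _ hx

/-- Corollary 5.9 of the paper: if `A` is empty or (the underlying set of) a normal
subgroup of `H`, then `[E_{l,m}, H] ⊆ E_{l+1,m+1}` for `1 ≤ l ≤ m`. -/
theorem commutator_Esub_le {H : Type*} [Group H] (A : Set H)
    (hA : A = ∅ ∨ ∃ N : Subgroup H, N.Normal ∧ A = ↑N)
    (l m : ℕ) (hl : 1 ≤ l) (hlm : l ≤ m) :
    ⁅Esub A l m, (⊤ : Subgroup H)⁆ ≤ Esub A (l + 1) (m + 1) := by
  haveI hN : (Esub A (l + 1) (m + 1)).Normal := esub_normal A hA (l + 1) (m + 1)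
  rw [Subgroup.commutator_le]
  intro g hg h _
  set π := QuotientGroup.mk' (Esub A (l + 1) (m + 1)) with hπ
  have key : Esub A l m ≤ (Subgroup.center (H ⧸ Esub A (l + 1) (m + 1))).comap π := by
    rw [Esub, Subgroup.closure_le]
    rintro z ⟨xs, k, S, h1, h2, h3, h4, h5, rfl⟩
    have hxs : xs ≠ [] := List.ne_nil_of_length_pos (by omega)
    set q := m - xs.length - k with hq
    set c : H ⧸ Esub A (l + 1) (m + 1) := π (nestedComm xs) with hc
    have hHc : Hc q c := by
      apply hc_of_nested
      intro ys hne hlen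
      obtain ⟨ls, rfl⟩ := list_lift (QuotientGroup.mk'_surjective _) ys
      have hls : ls ≠ [] := by
        intro hnil; rw [hnil] at hne; exact hne rfl
      have e1 : ls.map ⇑π ++ [c] = (ls ++ [nestedComm xs]).map ⇑π := by
        simp [hc]
      rw [e1, map_nestedComm, nestedComm_append xs hxs ls, ← map_pow]
      refine (QuotientGroup.eq_one_iff _).mpr ?_
      apply mem_Esub
      have hlslen : (ls.map ⇑π).length = ls.length := by simp
      rw [hlslen] at hlen
      have hlpos : 1 ≤ ls.length := List.length_pos_iff.mpr hls
      refine ⟨ls ++ xs, k,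
        S.map ⟨fun idx => ⟨ls.length + idx.1, by
            simp only [List.length_append]; omega⟩, by
          intro a b hab
          have := congrArg Fin.val hab
          simp only at this
          exact Fin.ext (by omega)⟩, ?_, ?_, ?_, ?_, ?_, ?_⟩
      · simp only [List.length_append]; omega
      · simp only [List.length_append]; omega
      · simp only [List.length_append]; omega
      · rwa [Finset.card_map]
      · intro j hj
        obtain ⟨j0, hj0, rfl⟩ := Finset.mem_map.mp hj
        have hmem : xs.get j0 ∈ A := h5 j0 hj0
        rw [List.get_eq_getElem] at hmem ⊢
        show (ls ++ xs)[ls.length + (j0 : ℕ)]'(by simp only [List.length_append]; omega) ∈ A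
        rw [List.getElem_append_right (by omega)]
        have : ls.length + (j0 : ℕ) - ls.length = (j0 : ℕ) := by omega
        simp only [this]
        exact hmem
      · have hexp : q + 1 - (ls.map ⇑π).length = m + 1 - (ls ++ xs).length - k := by
          simp only [List.length_append, hlslen]; omega
        rw [hexp]
    have hmain := (main_and_push q).1 c hHc
    rw [SetLike.mem_coe, Subgroup.mem_comap, map_pow]
    refine Subgroup.mem_center_iff.mpr fun gq => ?_
    exact commutatorElement_eq_one_iff_mul_comm.mp (hmain gq)
  have hcentral : π g ∈ Subgroup.center (H ⧸ Esub A (l + 1) (m + 1)) := by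
    have := key hg
    rw [Subgroup.mem_comap] at this
    exact this
  have h1 : π ⁅g, h⁆ = 1 := by
    rw [map_commutatorElement]
    exact commutatorElement_eq_one_iff_mul_comm.mpr
      (Subgroup.mem_center_iff.mp hcentral (π h)).symm
  exact (QuotientGroup.eq_one_iff _).mp h1
end

section
/- Let H be a group and define Ẽ_{l,m} = ⟨[x₁,…,x_i]^(2^(m−i)) : x₁,…,x_i ∈ H, l ≤ i ≤ m⟩ using right-nested iterated commutators. Then for every h ∈ H, 1 ≤ i ≤ m, and x ∈ Γ_i(H) of the form x = [x₁,…,x_i], one has [x^(2^(m−i)), h] ≡ [x, h]^(2^(m−i)) modulo Ẽ_{i+1,m+1}. -/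
open scoped commutatorElement

/-- The subgroup `Ẽ_{l,m} = ⟨[x₁, …, x_i]^{2^{m-i}} : x₁, …, x_i ∈ H, l ≤ i ≤ m⟩`. -/
def Etilde {H : Type*} [Group H] (l m : ℕ) : Subgroup H :=
  Subgroup.closure
    {z : H | ∃ xs : List H,
      l ≤ xs.length ∧ xs.length ≤ m ∧ z = nestedComm xs ^ 2 ^ (m - xs.length)}

section NestedAux

variable {H : Type*} [Group H] {K : Type*} [Group K]

lemma nestedComm_cons_s14 (x y : H) (ys : List H) :
    nestedComm (x :: y :: ys) = ⁅x, nestedComm (y :: ys)⁆ := rfl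

lemma map_nestedComm_s14 (f : H →* K) (xs : List H) :
    f (nestedComm xs) = nestedComm (xs.map f) := by
  induction xs with
  | nil => simp [nestedComm]
  | cons x xs ih =>
    cases xs with
    | nil => simp [nestedComm]
    | cons y ys =>
      simp only [List.map_cons] at ih ⊢
      rw [nestedComm_cons_s14, map_commutatorElement, ih, nestedComm_cons_s14]

instance Etilde_normal (l m : ℕ) : (Etilde l m : Subgroup H).Normal := by
  constructor
  intro n hn g
  set f : H →* H := (MulAut.conj g).toMonoidHom with hfdef
  have hmap : Subgroup.map f (Etilde l m) ≤ Etilde l m := by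
    rw [Etilde, MonoidHom.map_closure]
    apply Subgroup.closure_mono
    rintro z ⟨w, ⟨xs, hl, hm, rfl⟩, rfl⟩
    refine ⟨xs.map f, ?_, ?_, ?_⟩
    · simpa using hl
    · simpa using hm
    · rw [map_pow, map_nestedComm_s14, List.length_map]
  have hco : g * n * g⁻¹ = f n := by simp [hfdef]
  rw [hco]
  exact hmap ⟨n, hn, rfl⟩

end NestedAux

/-- Descending filtration: `goodSet G k` consists of elements killed by `2^k` all of whose
commutators lie one level down. -/
def goodSet (G : Type*) [Group G] : ℕ → Set G
  | 0 => {c | c = 1}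
  | (k+1) => {c | c ^ 2 ^ (k+1) = 1 ∧ ∀ a : G, ⁅a, c⁆ ∈ goodSet G k}

section Good

variable {G : Type*} [Group G]

lemma mem_goodSet_zero {c : G} : c ∈ goodSet G 0 ↔ c = 1 := Iff.rfl

lemma mem_goodSet_succ {k : ℕ} {c : G} :
    c ∈ goodSet G (k+1) ↔ (c ^ 2 ^ (k+1) = 1 ∧ ∀ a : G, ⁅a, c⁆ ∈ goodSet G k) := Iff.rfl

lemma good_pow : ∀ (k : ℕ) (c : G), c ∈ goodSet G k → c ^ 2 ^ k = 1
  | 0, c, hc => by rw [pow_zero, pow_one]; exact mem_goodSet_zero.mp hc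
  | (k+1), _, hc => (mem_goodSet_succ.mp hc).1

theorem good_package : ∀ k : ℕ,
    (∀ (g c : G), c ∈ goodSet G k → g * c * g⁻¹ ∈ goodSet G k) ∧
    (∀ c : G, c ∈ goodSet G k → c⁻¹ ∈ goodSet G k) ∧
    (∀ c c' : G, c ∈ goodSet G k → c' ∈ goodSet G k → c * c' ∈ goodSet G k) ∧
    (∀ c : G, c ∈ goodSet G (k+1) → c ^ 2 ∈ goodSet G k) := by
  intro k
  induction k with
  | zero =>
    refine ⟨?_, ?_, ?_, ?_⟩
    · intro g c hc
      rw [mem_goodSet_zero] at hc ⊢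
      rw [hc]; group
    · intro c hc
      rw [mem_goodSet_zero] at hc ⊢
      rw [hc]; group
    · intro c c' hc hc'
      rw [mem_goodSet_zero] at hc hc' ⊢
      rw [hc, hc']; group
    · intro c hc
      rw [mem_goodSet_zero]
      have := (mem_goodSet_succ.mp hc).1
      simpa using this
  | succ k ih =>
    obtain ⟨conjk, invk, mulk, sqk⟩ := ih
    have conj' : ∀ (g c : G), c ∈ goodSet G (k+1) → g * c * g⁻¹ ∈ goodSet G (k+1) := by
      intro g c hc
      obtain ⟨h1, h2⟩ := mem_goodSet_succ.mp hc
      refine mem_goodSet_succ.mpr ⟨?_, ?_⟩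
      · have : (g * c * g⁻¹) ^ 2 ^ (k+1) = g * c ^ 2 ^ (k+1) * g⁻¹ := by
          rw [show g * c * g⁻¹ = (MulAut.conj g) c from rfl, ← map_pow]; rfl
        rw [this, h1]; group
      · intro a
        have hid : ⁅a, g * c * g⁻¹⁆ = g * ⁅g⁻¹ * a * g, c⁆ * g⁻¹ := by
          simp only [commutatorElement_def]; group
        rw [hid]
        exact conjk _ _ (h2 _)
    have inv' : ∀ c : G, c ∈ goodSet G (k+1) → c⁻¹ ∈ goodSet G (k+1) := by
      intro c hc
      obtain ⟨h1, h2⟩ := mem_goodSet_succ.mp hc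
      refine mem_goodSet_succ.mpr ⟨?_, ?_⟩
      · rw [inv_pow, h1, inv_one]
      · intro a
        have hid : ⁅a, c⁻¹⁆ = c⁻¹ * ⁅a, c⁆⁻¹ * (c⁻¹)⁻¹ := by
          simp only [commutatorElement_def]; group
        rw [hid]
        exact conjk _ _ (invk _ (h2 a))
    have sq' : ∀ c : G, c ∈ goodSet G (k+1+1) → c ^ 2 ∈ goodSet G (k+1) := by
      intro c hc
      obtain ⟨h1, h2⟩ := mem_goodSet_succ.mp hc
      refine mem_goodSet_succ.mpr ⟨?_, ?_⟩
      · rw [← pow_mul, show 2 * 2 ^ (k+1) = 2 ^ (k+1+1) by ring, h1]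
      · intro a
        have hp : ⁅a, c⁆ ∈ goodSet G (k+1) := h2 a
        have hid : ⁅a, c ^ 2⁆ =
            ⁅a, c⁆ ^ 2 * (⁅a, c⁆⁻¹ * ⁅c, ⁅a, c⁆⁆ * (⁅a, c⁆⁻¹)⁻¹) := by
          simp only [commutatorElement_def, pow_two]; group
        rw [hid]
        exact mulk _ _ (sqk _ hp) (conjk _ _ ((mem_goodSet_succ.mp hp).2 c))
    have mul' : ∀ c c' : G, c ∈ goodSet G (k+1) → c' ∈ goodSet G (k+1) →
        c * c' ∈ goodSet G (k+1) := by
      intro c c' hc hc'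
      have hsq : (c * c') ^ 2 ∈ goodSet G k := by
        have hid : (c * c') ^ 2 =
            c ^ 2 * c' ^ 2 * (c'⁻¹ * ⁅c'⁻¹, c⁻¹⁆ * (c'⁻¹)⁻¹) := by
          simp only [commutatorElement_def, pow_two]; group
        rw [hid]
        exact mulk _ _ (mulk _ _ (sqk _ hc) (sqk _ hc'))
          (conjk _ _ ((mem_goodSet_succ.mp (inv' c hc)).2 c'⁻¹))
      refine mem_goodSet_succ.mpr ⟨?_, ?_⟩
      · rw [show (2:ℕ) ^ (k+1) = 2 * 2 ^ k by ring, pow_mul]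
        exact good_pow k _ hsq
      · intro a
        have hid : ⁅a, c * c'⁆ = ⁅a, c⁆ * (c * ⁅a, c'⁆ * c⁻¹) := by
          simp only [commutatorElement_def]; group
        rw [hid]
        exact mulk _ _ ((mem_goodSet_succ.mp hc).2 a)
          (conjk _ _ ((mem_goodSet_succ.mp hc').2 a))
    exact ⟨conj', inv', mul', sq'⟩

theorem good_power : ∀ (r k : ℕ) (b : G),
    (∀ a : G, ⁅a, b⁆ ∈ goodSet G (k + r)) → ∀ a : G, ⁅a, b ^ 2 ^ r⁆ ∈ goodSet G k := by
  intro r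
  induction r with
  | zero =>
    intro k b hb a
    simpa using hb a
  | succ r ih =>
    intro k b hb a
    have hb2 : ∀ a : G, ⁅a, b ^ 2⁆ ∈ goodSet G (k + r) := by
      intro a
      obtain ⟨conjk, invk, mulk, sqk⟩ := good_package (G := G) (k + r)
      have hp : ⁅a, b⁆ ∈ goodSet G (k + r + 1) := hb a
      have hid : ⁅a, b ^ 2⁆ =
          ⁅a, b⁆ ^ 2 * (⁅a, b⁆⁻¹ * ⁅b, ⁅a, b⁆⁆ * (⁅a, b⁆⁻¹)⁻¹) := by
        simp only [commutatorElement_def, pow_two]; group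
      rw [hid]
      exact mulk _ _ (sqk _ hp) (conjk _ _ ((mem_goodSet_succ.mp hp).2 b))
    rw [show (2:ℕ) ^ (r+1) = 2 * 2 ^ r by ring, pow_mul]
    exact ih k (b ^ 2) hb2 a

end Good

theorem nested_mem_good {H : Type*} [Group H] (i m : ℕ) :
    ∀ (n : ℕ) (ys : List H), ys.length + n = m + 1 → i + 1 ≤ ys.length →
      (QuotientGroup.mk' (Etilde (i+1) (m+1))) (nestedComm ys) ∈
        goodSet (H ⧸ Etilde (i+1) (m+1)) n := by
  intro n
  induction n with
  | zero =>
    intro ys h1 h2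
    refine mem_goodSet_zero.mpr ?_
    rw [QuotientGroup.mk'_apply, QuotientGroup.eq_one_iff]
    apply Subgroup.subset_closure
    exact ⟨ys, by omega, by omega,
      by rw [show m + 1 - ys.length = 0 from by omega, pow_zero, pow_one]⟩
  | succ n ih =>
    intro ys h1 h2
    refine mem_goodSet_succ.mpr ⟨?_, ?_⟩
    · rw [← map_pow, QuotientGroup.mk'_apply, QuotientGroup.eq_one_iff]
      apply Subgroup.subset_closure
      exact ⟨ys, by omega, by omega,
        by rw [show m + 1 - ys.length = n + 1 from by omega]⟩
    · intro a
      obtain ⟨b, rfl⟩ := QuotientGroup.mk'_surjective _ a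
      rw [← map_commutatorElement]
      cases ys with
      | nil => simp at h2
      | cons y ys' =>
        rw [← nestedComm_cons_s14]
        exact ih (b :: y :: ys')
          (by simp only [List.length_cons] at h1 ⊢; omega)
          (by simp only [List.length_cons] at h2 ⊢; omega)

/-- Lemma 5.8 of the paper (case `A = ∅`): for `1 ≤ i ≤ m`, `h ∈ H` and
`x = [x₁, …, x_i] ∈ Γ_i(H)`, one has `[x^{2^{m-i}}, h] ≡ [x, h]^{2^{m-i}}`
modulo `Ẽ_{i+1,m+1}`. -/
theorem commutator_pow_congruence {H : Type*} [Group H] (h : H) (m i : ℕ)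
    (hi : 1 ≤ i) (him : i ≤ m) (xs : List H) (hlen : xs.length = i) :
    ⁅nestedComm xs ^ 2 ^ (m - i), h⁆ * (⁅nestedComm xs, h⁆ ^ 2 ^ (m - i))⁻¹ ∈
      Etilde (i + 1) (m + 1) := by
  rw [← QuotientGroup.eq_one_iff]
  set f : H →* H ⧸ Etilde (i+1) (m+1) := QuotientGroup.mk' _ with hf
  show f (⁅nestedComm xs ^ 2 ^ (m - i), h⁆ * (⁅nestedComm xs, h⁆ ^ 2 ^ (m - i))⁻¹) = 1
  simp only [map_mul, map_inv, map_pow, map_commutatorElement]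
  have h2 : ∀ a : H ⧸ Etilde (i+1) (m+1),
      ⁅a, f (nestedComm xs)⁆ ∈ goodSet (H ⧸ Etilde (i+1) (m+1)) (m - i) := by
    intro a
    obtain ⟨b, rfl⟩ := QuotientGroup.mk'_surjective _ a
    rw [← hf, ← map_commutatorElement]
    cases xs with
    | nil => rw [List.length_nil] at hlen; omega
    | cons y ys =>
      rw [← nestedComm_cons_s14]
      exact nested_mem_good i m (m - i) (b :: y :: ys)
        (by simp only [List.length_cons] at hlen ⊢; omega)
        (by simp only [List.length_cons] at hlen ⊢; omega)
  have hpow : ∀ a : H ⧸ Etilde (i+1) (m+1),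
      ⁅a, f (nestedComm xs) ^ 2 ^ (m - i)⁆ = 1 := by
    intro a
    exact mem_goodSet_zero.mp
      (good_power (m - i) 0 (f (nestedComm xs)) (by intro a; simpa using h2 a) a)
  have e1 : ⁅f (nestedComm xs) ^ 2 ^ (m - i), f h⁆ = 1 := by
    rw [← commutatorElement_inv, hpow (f h), inv_one]
  have e2 : ⁅f (nestedComm xs), f h⁆ ^ 2 ^ (m - i) = 1 := by
    have hp := good_pow (m - i) _ (h2 (f h))
    rw [← commutatorElement_inv, inv_pow, hp, inv_one]
  rw [e1, e2]
  group
end
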